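/- Let G be a group acting on a set X, and let K be a normal subgroup of G whose restricted action on X is free. Then the quotient equivariant map (π, p) : G⋉X → (G/K)⋉(X/K), where π : G → G/K is the quotient homomorphism and p : X → X/K is the orbit map, is an essential equivalence: it is fully faithful and essentially surjective. -/

import Mathlib

/-- An equivariant map `(φ, f) : G⋉X → H⋉Y` between translation groupoids is *fully
faithful* if for all `x, x' ∈ X` and `h ∈ H` with `h • f x = f x'` there is a unique
`g ∈ G` with `φ g = h` and `g • x = x'`. -/
def IsFullyFaithful {G H : Type*} [Group G] [Group H] {X Y : Type*}
    [MulAction G X] [MulAction H Y] (φ : G →* H) (f : X → Y) : Prop :=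
  ∀ (x x' : X) (h : H), h • f x = f x' → ∃! g : G, φ g = h ∧ g • x = x'

/-- An equivariant map with underlying map `f : X → Y` into an `H`-set `Y` is
*essentially surjective* if every `y ∈ Y` is of the form `h • f x`. -/
def IsEssSurj {H : Type*} [Group H] {X Y : Type*} [MulAction H Y] (f : X → Y) : Prop :=
  ∀ y : Y, ∃ (x : X) (h : H), h • f x = y

variable {G : Type*} [Group G] {X : Type*} [MulAction G X]

/-- The set `X/K` of `K`-orbits of the `G`-set `X`, for a subgroup `K ≤ G`. -/
def OrbitQuot (K : Subgroup G) (X : Type*) [MulAction G X] : Type _ :=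
  Quotient (MulAction.orbitRel K X)

/-- The orbit map `X → X/K`. -/
def OrbitQuot.mk (K : Subgroup G) (x : X) : OrbitQuot K X :=
  Quotient.mk (MulAction.orbitRel K X) x

/-- For `K ⊴ G` normal, the induced action of `G/K` on `X/K`: `(gK) • (K•x) = K•(g•x)`. -/
instance OrbitQuot.instMulAction (K : Subgroup G) [K.Normal] :
    MulAction (G ⧸ K) (OrbitQuot K X) where
  smul g x := Quotient.liftOn₂ g x (fun g x => OrbitQuot.mk K (g • x)) <| by
    intro g₁ x₁ g₂ x₂ hg hx
    have hg' : g₁⁻¹ * g₂ ∈ K := QuotientGroup.leftRel_apply.mp hg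
    have hx' : x₁ ∈ MulAction.orbit K x₂ := hx
    obtain ⟨k, hk⟩ := hx'
    apply Quotient.sound
    show g₁ • x₁ ∈ MulAction.orbit K (g₂ • x₂)
    refine ⟨⟨g₁ * ((k : G) * (g₁⁻¹ * g₂)⁻¹) * g₁⁻¹,
      Subgroup.Normal.conj_mem inferInstance _ (K.mul_mem k.2 (K.inv_mem hg')) g₁⟩, ?_⟩
    show (g₁ * ((k : G) * (g₁⁻¹ * g₂)⁻¹) * g₁⁻¹) • g₂ • x₂ = g₁ • x₁
    have hk' : (k : G) • x₂ = x₁ := hk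
    rw [← hk', ← mul_smul, ← mul_smul]
    congr 1
    group
  one_smul := by
    rintro ⟨x⟩
    exact congrArg (OrbitQuot.mk K) (one_smul G x)
  mul_smul := by
    rintro ⟨a⟩ ⟨b⟩ ⟨x⟩
    exact congrArg (OrbitQuot.mk K) (mul_smul a b x)

/-- If `K ⊴ G` acts freely on `X`, then the quotient equivariant map
`(π, p) : G⋉X → (G/K)⋉(X/K)` is an essential equivalence: it is equivariant,
fully faithful and essentially surjective. -/
theorem stmt_2 (K : Subgroup G) [K.Normal]
    (hfree : ∀ (k : K) (x : X), (k : G) • x = x → k = 1) :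
    (∀ (g : G) (x : X),
        OrbitQuot.mk K (g • x) = QuotientGroup.mk' K g • OrbitQuot.mk K x)
    ∧ IsFullyFaithful (QuotientGroup.mk' K) (OrbitQuot.mk K (X := X))
    ∧ IsEssSurj (H := G ⧸ K) (OrbitQuot.mk K (X := X)) := by
  refine ⟨fun g x => rfl, ?_, ?_⟩
  · intro x x' h hs
    induction h using QuotientGroup.induction_on with
    | H g =>
      have : OrbitQuot.mk K (g • x) = OrbitQuot.mk K x' := hs
      have hrel : g • x ∈ MulAction.orbit K x' := Quotient.exact this
      obtain ⟨k, hk⟩ := hrel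
      refine ⟨(k : G)⁻¹ * g, ⟨?_, ?_⟩, ?_⟩
      · simpa using (QuotientGroup.eq (s := K)).mpr (by simpa using K.inv_mem k.2)
      · have hk' : (k : G) • x' = g • x := hk
        rw [mul_smul, ← hk', inv_smul_smul]
      · rintro g' ⟨hφ, hx⟩
        have heq : (QuotientGroup.mk g' : G ⧸ K) = QuotientGroup.mk ((k:G)⁻¹ * g) := by
          rw [show (QuotientGroup.mk g' : G ⧸ K) = QuotientGroup.mk' K g' from rfl, hφ]
          refine ((QuotientGroup.eq (s := K)).mpr ?_).symm
          have := Subgroup.Normal.conj_mem (inferInstance : K.Normal) _ k.2 g⁻¹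
          simpa [mul_assoc] using this
        have hmem : g'⁻¹ * ((k:G)⁻¹ * g) ∈ K := QuotientGroup.eq.mp heq
        have hfix : (g'⁻¹ * ((k:G)⁻¹ * g)) • x = x := by
          have hk' : (k : G) • x' = g • x := hk
          have h2 : ((k:G)⁻¹ * g) • x = x' := by rw [mul_smul, ← hk', inv_smul_smul]
          rw [mul_smul, h2, ← hx, inv_smul_smul]
        have := hfree ⟨_, hmem⟩ x hfix
        have h1 : g'⁻¹ * ((k:G)⁻¹ * g) = 1 := congrArg Subtype.val this
        have := mul_eq_one_iff_inv_eq.mp h1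
        rw [← this, inv_inv]
  · rintro ⟨x⟩
    exact ⟨x, 1, one_smul _ _⟩
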